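/- Let m ≥ n and let Ã ∈ ℝ^{m×n} have nonzero columns. If obliq(Ã) ≤ θ for some θ < 1, then Ã·D(Ã) has full rank and κ₂ᴰ(Ã) ≤ (1 + θ)/(1 − θ). -/

import Mathlib

open scoped BigOperators
open Matrix

lemma quad_decomp {k : ℕ} (M : Matrix (Fin k) (Fin k) ℝ) (hM : M.IsHermitian)
    (x : Fin k → ℝ) :
    ∃ y : Fin k → ℝ,
      x ⬝ᵥ (M *ᵥ x) = ∑ i, hM.eigenvalues i * y i ^ 2 ∧ x ⬝ᵥ x = ∑ i, y i ^ 2 := by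
  classical
  set V : Matrix (Fin k) (Fin k) ℝ := (hM.eigenvectorUnitary : Matrix (Fin k) (Fin k) ℝ) with hVdef
  have hVmem : V ∈ Matrix.unitaryGroup (Fin k) ℝ := (hM.eigenvectorUnitary).2
  have hVV : V * star V = 1 := (Matrix.mem_unitaryGroup_iff).mp hVmem
  have hstar : star V = Vᵀ := by
    ext i j
    simp [Matrix.star_apply]
  set y : Fin k → ℝ := star V *ᵥ x with hy
  have hxy : x ᵥ* V = y := by
    rw [hy, hstar, Matrix.mulVec_transpose]
  have hdiag : (Matrix.diagonal (RCLike.ofReal ∘ hM.eigenvalues) : Matrix (Fin k) (Fin k) ℝ)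
      = Matrix.diagonal hM.eigenvalues := by
    congr 1
  refine ⟨y, ?_, ?_⟩
  · conv_lhs => rw [hM.spectral_theorem, Unitary.conjStarAlgAut_apply]
    rw [← Matrix.mulVec_mulVec, ← Matrix.mulVec_mulVec, Matrix.dotProduct_mulVec, hxy, hdiag, ← hy]
    simp only [dotProduct, Matrix.mulVec_diagonal]
    exact Finset.sum_congr rfl fun i _ => by ring
  · have h1 : y ⬝ᵥ y = x ⬝ᵥ x := by
      calc y ⬝ᵥ y = (x ᵥ* V) ⬝ᵥ y := by rw [hxy]
        _ = x ⬝ᵥ (V *ᵥ y) := (Matrix.dotProduct_mulVec x V y).symm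
        _ = x ⬝ᵥ ((V * star V) *ᵥ x) := by rw [hy, Matrix.mulVec_mulVec]
        _ = x ⬝ᵥ x := by rw [hVV, Matrix.one_mulVec]
    rw [← h1]
    simp only [dotProduct]
    exact Finset.sum_congr rfl fun i _ => by ring

lemma quad_le_of_eig {k : ℕ} (M : Matrix (Fin k) (Fin k) ℝ) (hM : M.IsHermitian)
    {b : ℝ} (hb : ∀ i, hM.eigenvalues i ≤ b) (x : Fin k → ℝ) :
    x ⬝ᵥ (M *ᵥ x) ≤ b * (x ⬝ᵥ x) := by
  obtain ⟨y, h1, h2⟩ := quad_decomp M hM x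
  rw [h1, h2, Finset.mul_sum]
  exact Finset.sum_le_sum fun i _ => mul_le_mul_of_nonneg_right (hb i) (sq_nonneg _)

lemma quad_ge_of_eig {k : ℕ} (M : Matrix (Fin k) (Fin k) ℝ) (hM : M.IsHermitian)
    {a : ℝ} (ha : ∀ i, a ≤ hM.eigenvalues i) (x : Fin k → ℝ) :
    a * (x ⬝ᵥ x) ≤ x ⬝ᵥ (M *ᵥ x) := by
  obtain ⟨y, h1, h2⟩ := quad_decomp M hM x
  rw [h1, h2, Finset.mul_sum]
  exact Finset.sum_le_sum fun i _ => mul_le_mul_of_nonneg_right (ha i) (sq_nonneg _)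

lemma eig_le_of_quad {k : ℕ} (M : Matrix (Fin k) (Fin k) ℝ) (hM : M.IsHermitian)
    {b : ℝ} (h : ∀ x : Fin k → ℝ, x ⬝ᵥ (M *ᵥ x) ≤ b * (x ⬝ᵥ x)) (i : Fin k) :
    hM.eigenvalues i ≤ b := by
  set v : Fin k → ℝ := ⇑(hM.eigenvectorBasis i) with hv
  have hMv : M *ᵥ v = hM.eigenvalues i • v := hM.mulVec_eigenvectorBasis i
  have hvz : v ≠ 0 := by
    intro h0
    exact hM.eigenvectorBasis.orthonormal.ne_zero i (by ext1 j; exact congrFun h0 j)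
  have hpos : 0 < v ⬝ᵥ v := by
    have hnn : 0 ≤ v ⬝ᵥ v := Finset.sum_nonneg fun i _ => mul_self_nonneg _
    rcases lt_or_eq_of_le hnn with h' | h'
    · exact h'
    · exact absurd (dotProduct_self_eq_zero.mp h'.symm) hvz
  have := h v
  rw [hMv, dotProduct_smul, smul_eq_mul] at this
  exact le_of_mul_le_mul_right this hpos

lemma eig_ge_of_quad {k : ℕ} (M : Matrix (Fin k) (Fin k) ℝ) (hM : M.IsHermitian)
    {a : ℝ} (h : ∀ x : Fin k → ℝ, a * (x ⬝ᵥ x) ≤ x ⬝ᵥ (M *ᵥ x)) (i : Fin k) :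
    a ≤ hM.eigenvalues i := by
  set v : Fin k → ℝ := ⇑(hM.eigenvectorBasis i) with hv
  have hMv : M *ᵥ v = hM.eigenvalues i • v := hM.mulVec_eigenvectorBasis i
  have hvz : v ≠ 0 := by
    intro h0
    exact hM.eigenvectorBasis.orthonormal.ne_zero i (by ext1 j; exact congrFun h0 j)
  have hpos : 0 < v ⬝ᵥ v := by
    have hnn : 0 ≤ v ⬝ᵥ v := Finset.sum_nonneg fun i _ => mul_self_nonneg _
    rcases lt_or_eq_of_le hnn with h' | h'
    · exact h'
    · exact absurd (dotProduct_self_eq_zero.mp h'.symm) hvz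
  have := h v
  rw [hMv, dotProduct_smul, smul_eq_mul] at this
  exact le_of_mul_le_mul_right this hpos


/-- Euclidean norm of a vector in `ℝ^m`. -/
noncomputable def vecNorm {m : ℕ} (v : Fin m → ℝ) : ℝ :=
  Real.sqrt (∑ i, v i ^ 2)

theorem Matrix.isHermitian_transpose_mul_self {m n : ℕ} (A : Matrix (Fin m) (Fin n) ℝ) :
    (Aᵀ * A).IsHermitian := by
  simpa [Matrix.conjTranspose_eq_transpose_of_trivial] using
    Matrix.isHermitian_conjTranspose_mul_self A

/-- The `k`-th largest singular value of a real `m × n` matrix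
(`k = 0` gives the largest). -/
noncomputable def sval {m n : ℕ} (A : Matrix (Fin m) (Fin n) ℝ) (k : Fin n) : ℝ :=
  Real.sqrt
    (((Matrix.isHermitian_transpose_mul_self A).eigenvalues ∘
      Tuple.sort (Matrix.isHermitian_transpose_mul_self A).eigenvalues) k.rev)

/-- Spectral norm: the largest singular value. -/
noncomputable def specNorm {m n : ℕ} (A : Matrix (Fin m) (Fin n) ℝ) : ℝ :=
  ⨆ k, sval A k

/-- Smallest singular value. -/
noncomputable def sMin {m n : ℕ} (A : Matrix (Fin m) (Fin n) ℝ) : ℝ :=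
  ⨅ k, sval A k

/-- Frobenius norm. -/
noncomputable def frobNorm {m n : ℕ} (A : Matrix (Fin m) (Fin n) ℝ) : ℝ :=
  Real.sqrt (∑ i, ∑ j, (A i j) ^ 2)

/-- Frobenius norm of the off-diagonal part of a square matrix. -/
noncomputable def offF {n : ℕ} (M : Matrix (Fin n) (Fin n) ℝ) : ℝ :=
  frobNorm (M - Matrix.diagonal (fun i => M i i))

/-- Diagonal matrix of inverse column norms `D(A)`. -/
noncomputable def colScale {m n : ℕ} (A : Matrix (Fin m) (Fin n) ℝ) :
    Matrix (Fin n) (Fin n) ℝ :=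
  Matrix.diagonal (fun j => (vecNorm (fun i => A i j))⁻¹)

/-- Condition number `κ₂(A) = σ_max(A) / σ_min(A)`. -/
noncomputable def kappa2 {m n : ℕ} (A : Matrix (Fin m) (Fin n) ℝ) : ℝ :=
  specNorm A / sMin A

/-- One-sided scaled condition number `κ₂ᴰ(A) = κ₂(A · D(A))`. -/
noncomputable def scaledCond {m n : ℕ} (A : Matrix (Fin m) (Fin n) ℝ) : ℝ :=
  kappa2 (A * colScale A)

/-- Entrywise absolute value of a matrix. -/
def matAbs {m n : ℕ} (A : Matrix (Fin m) (Fin n) ℝ) : Matrix (Fin m) (Fin n) ℝ :=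
  fun i j => |A i j|



/-- Euclidean norm of a plain vector. -/
noncomputable def eN {k : ℕ} (v : Fin k → ℝ) : ℝ :=
  ‖(WithLp.equiv 2 (Fin k → ℝ)).symm v‖

lemma eN_nonneg {k : ℕ} (v : Fin k → ℝ) : 0 ≤ eN v := norm_nonneg _

lemma eN_sq {k : ℕ} (v : Fin k → ℝ) : eN v ^ 2 = v ⬝ᵥ v := by
  rw [eN, EuclideanSpace.norm_eq, Real.sq_sqrt (Finset.sum_nonneg fun i _ => sq_nonneg _)]
  simp only [dotProduct, WithLp.equiv_symm_apply, WithLp.ofLp_toLp, Real.norm_eq_abs, sq_abs]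
  exact Finset.sum_congr rfl fun i _ => (sq (v i)) ▸ by ring

lemma eN_add_le {k : ℕ} (u v : Fin k → ℝ) : eN (u + v) ≤ eN u + eN v := by
  have h : (WithLp.equiv 2 (Fin k → ℝ)).symm (u + v)
      = (WithLp.equiv 2 (Fin k → ℝ)).symm u + (WithLp.equiv 2 (Fin k → ℝ)).symm v := rfl
  rw [eN, h]
  exact norm_add_le _ _

lemma eN_sub_le {k : ℕ} (u v : Fin k → ℝ) : eN (u - v) ≤ eN u + eN v := by
  have h : (WithLp.equiv 2 (Fin k → ℝ)).symm (u - v)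
      = (WithLp.equiv 2 (Fin k → ℝ)).symm u - (WithLp.equiv 2 (Fin k → ℝ)).symm v := rfl
  rw [eN, h]
  exact norm_sub_le _ _

lemma eN_eq_sqrt_dot {k : ℕ} (v : Fin k → ℝ) : eN v = Real.sqrt (v ⬝ᵥ v) := by
  rw [← eN_sq, Real.sqrt_sq (eN_nonneg v)]


lemma dot_mulVec_self {p q : ℕ} (M : Matrix (Fin p) (Fin q) ℝ) (x : Fin q → ℝ) :
    x ⬝ᵥ ((Mᴴ * M) *ᵥ x) = (M *ᵥ x) ⬝ᵥ (M *ᵥ x) := by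
  rw [Matrix.conjTranspose_eq_transpose_of_trivial]
  have h1 : x ⬝ᵥ ((Mᵀ * M) *ᵥ x) = (x ᵥ* Mᵀ) ⬝ᵥ (M *ᵥ x) := by
    rw [← Matrix.mulVec_mulVec]
    exact Matrix.dotProduct_mulVec x Mᵀ (M *ᵥ x)
  rw [Matrix.vecMul_transpose] at h1
  exact h1

/-- Proposition 3.5: a small obliquity bounds the one-sided scaled condition
number, `κ₂ᴰ(Ã) ≤ (1 + θ)/(1 − θ)`. -/
theorem scaled_cond_bound_of_obliquity
    {m n : ℕ} (hmn : n ≤ m)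
    (A : Matrix (Fin m) (Fin n) ℝ)
    (hcols : ∀ j, (fun i => A i j) ≠ 0)
    (θ : ℝ) (hθ1 : θ < 1)
    (hobliq : ∃ (U : Matrix (Fin m) (Fin n) ℝ) (H : Matrix (Fin n) (Fin n) ℝ),
      Uᵀ * U = 1 ∧ H.PosSemidef ∧ A * colScale A = U * H ∧
      specNorm (A * colScale A - U) ≤ θ) :
    (A * colScale A).rank = n ∧ scaledCond A ≤ (1 + θ) / (1 - θ) := by
  classical
  obtain ⟨U, H, hU, _hH, _hBUH, hsp⟩ := hobliq
  set B : Matrix (Fin m) (Fin n) ℝ := A * colScale A with hBdef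
  set C : Matrix (Fin m) (Fin n) ℝ := B - U with hCdef
  have hθm : 0 < 1 - θ := by linarith
  rcases Nat.eq_zero_or_pos n with hn | hn
  · subst hn
    constructor
    · exact Nat.le_zero.mp ((Matrix.rank_le_width B).trans (by simp))
    · have hθ0 : 0 ≤ θ := by
        have : specNorm C = 0 := by
          rw [specNorm]
          exact Real.iSup_of_isEmpty _
        linarith [this ▸ hsp]
      have h0 : scaledCond A = specNorm B / sMin B := rfl
      rw [h0, specNorm, Real.iSup_of_isEmpty, zero_div]
      exact div_nonneg (by linarith) (by linarith)
  · haveI : Nonempty (Fin n) := ⟨⟨0, hn⟩⟩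
    have hbddC : BddAbove (Set.range (sval C)) := (Set.finite_range _).bddAbove
    have hθ0 : 0 ≤ θ := by
      have h1 : sval C ⟨0, hn⟩ ≤ specNorm C := le_ciSup hbddC _
      have h2 : 0 ≤ sval C ⟨0, hn⟩ := Real.sqrt_nonneg _
      linarith
    have hθp : 0 ≤ 1 + θ := by linarith
    -- eigenvalue bound for CᵀC
    have hsvalC : ∀ k, sval C k ≤ θ := fun k => (le_ciSup hbddC k).trans hsp
    have hμC : ∀ i, (Matrix.isHermitian_transpose_mul_self C).eigenvalues i ≤ θ ^ 2 := by
      intro i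
      set σ := Tuple.sort (Matrix.isHermitian_transpose_mul_self C).eigenvalues with hσ
      have h1 := hsvalC ((σ.symm i).rev)
      rw [sval, Function.comp_apply, Fin.rev_rev, ← hσ, Equiv.apply_symm_apply] at h1
      have hnn : 0 ≤ (Matrix.isHermitian_transpose_mul_self C).eigenvalues i :=
        Matrix.eigenvalues_conjTranspose_mul_self_nonneg C i
      calc (Matrix.isHermitian_transpose_mul_self C).eigenvalues i
          = Real.sqrt ((Matrix.isHermitian_transpose_mul_self C).eigenvalues i) ^ 2 :=
            (Real.sq_sqrt hnn).symm
        _ ≤ θ ^ 2 := pow_le_pow_left₀ (Real.sqrt_nonneg _) h1 2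
    -- quadratic form bound for C
    have hCq : ∀ x : Fin n → ℝ, eN (C *ᵥ x) ≤ θ * eN x := by
      intro x
      have hq := quad_le_of_eig _ (Matrix.isHermitian_transpose_mul_self C) hμC x
      rw [← Matrix.conjTranspose_eq_transpose_of_trivial, dot_mulVec_self] at hq
      have h1 : eN (C *ᵥ x) ^ 2 ≤ (θ * eN x) ^ 2 := by
        rw [eN_sq, mul_pow, eN_sq]
        exact hq
      calc eN (C *ᵥ x) = Real.sqrt (eN (C *ᵥ x) ^ 2) := (Real.sqrt_sq (eN_nonneg _)).symm
        _ ≤ Real.sqrt ((θ * eN x) ^ 2) := Real.sqrt_le_sqrt h1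
        _ = θ * eN x := Real.sqrt_sq (mul_nonneg hθ0 (eN_nonneg _))
    -- isometry for U
    have hUq : ∀ x : Fin n → ℝ, eN (U *ᵥ x) = eN x := by
      intro x
      have hdot : (U *ᵥ x) ⬝ᵥ (U *ᵥ x) = x ⬝ᵥ x := by
        have h1 := dot_mulVec_self U x
        have hUH : Uᴴ = Uᵀ := Matrix.conjTranspose_eq_transpose_of_trivial U
        rw [hUH, hU, Matrix.one_mulVec] at h1
        exact h1.symm
      rw [eN_eq_sqrt_dot, eN_eq_sqrt_dot, hdot]
    -- two-sided bounds for B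
    have hBup : ∀ x : Fin n → ℝ, eN (B *ᵥ x) ≤ (1 + θ) * eN x := by
      intro x
      have hBx : B *ᵥ x = U *ᵥ x + C *ᵥ x := by
        rw [hCdef]
        rw [Matrix.sub_mulVec]
        abel
      calc eN (B *ᵥ x) ≤ eN (U *ᵥ x) + eN (C *ᵥ x) := hBx ▸ eN_add_le _ _
        _ ≤ eN x + θ * eN x := by
            have := hCq x
            rw [hUq x]
            linarith
        _ = (1 + θ) * eN x := by ring
    have hBlo : ∀ x : Fin n → ℝ, (1 - θ) * eN x ≤ eN (B *ᵥ x) := by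
      intro x
      have hUx : U *ᵥ x = B *ᵥ x - C *ᵥ x := by
        rw [hCdef, Matrix.sub_mulVec]
        abel
      have h1 : eN x ≤ eN (B *ᵥ x) + θ * eN x := by
        calc eN x = eN (U *ᵥ x) := (hUq x).symm
          _ = eN (B *ᵥ x - C *ᵥ x) := by rw [hUx]
          _ ≤ eN (B *ᵥ x) + eN (C *ᵥ x) := eN_sub_le _ _
          _ ≤ eN (B *ᵥ x) + θ * eN x := by linarith [hCq x]
      linarith
    -- eigenvalue bounds for BᵀB
    have hμBu : ∀ i, (Matrix.isHermitian_transpose_mul_self B).eigenvalues i ≤ (1 + θ) ^ 2 := by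
      apply eig_le_of_quad
      intro x
      rw [← Matrix.conjTranspose_eq_transpose_of_trivial, dot_mulVec_self, ← eN_sq, ← eN_sq]
      calc eN (B *ᵥ x) ^ 2 ≤ ((1 + θ) * eN x) ^ 2 :=
            pow_le_pow_left₀ (eN_nonneg _) (hBup x) 2
        _ = (1 + θ) ^ 2 * eN x ^ 2 := by ring
    have hμBl : ∀ i, (1 - θ) ^ 2 ≤ (Matrix.isHermitian_transpose_mul_self B).eigenvalues i := by
      apply eig_ge_of_quad
      intro x
      rw [← Matrix.conjTranspose_eq_transpose_of_trivial, dot_mulVec_self, ← eN_sq, ← eN_sq]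
      calc (1 - θ) ^ 2 * eN x ^ 2 = ((1 - θ) * eN x) ^ 2 := by ring
        _ ≤ eN (B *ᵥ x) ^ 2 :=
            pow_le_pow_left₀ (mul_nonneg (le_of_lt hθm) (eN_nonneg _)) (hBlo x) 2
    -- singular value bounds for B
    have hsvB : ∀ k, 1 - θ ≤ sval B k ∧ sval B k ≤ 1 + θ := by
      intro k
      rw [sval, Function.comp_apply]
      set i := Tuple.sort (Matrix.isHermitian_transpose_mul_self B).eigenvalues k.rev
      constructor
      · calc 1 - θ = Real.sqrt ((1 - θ) ^ 2) := (Real.sqrt_sq (le_of_lt hθm)).symm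
          _ ≤ _ := Real.sqrt_le_sqrt (hμBl i)
      · calc Real.sqrt ((Matrix.isHermitian_transpose_mul_self B).eigenvalues i)
            ≤ Real.sqrt ((1 + θ) ^ 2) := Real.sqrt_le_sqrt (hμBu i)
          _ = 1 + θ := Real.sqrt_sq hθp
    constructor
    · -- rank
      have hdet : (Bᴴ * B).det ≠ 0 := by
        rw [Matrix.conjTranspose_eq_transpose_of_trivial, (Matrix.isHermitian_transpose_mul_self B).det_eq_prod_eigenvalues]
        apply Finset.prod_ne_zero_iff.mpr
        intro i _
        exact ne_of_gt (lt_of_lt_of_le (pow_pos hθm 2) (hμBl i))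
      have hrank : (Bᴴ * B).rank = n := by
        rw [Matrix.rank_of_isUnit _ (Matrix.isUnit_iff_isUnit_det _ |>.mpr
          (isUnit_iff_ne_zero.mpr hdet)), Fintype.card_fin]
      have hBH : Bᴴ = Bᵀ := Matrix.conjTranspose_eq_transpose_of_trivial B
      rw [← Matrix.rank_transpose_mul_self B, ← hBH, hrank]
    · -- condition number
      have h0 : scaledCond A = specNorm B / sMin B := rfl
      rw [h0]
      have hspecB : specNorm B ≤ 1 + θ :=
        ciSup_le fun k => (hsvB k).2
      have hminB : 1 - θ ≤ sMin B :=
        le_ciInf fun k => (hsvB k).1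
      exact div_le_div₀ hθp hspecB hθm hminB
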